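/- For nonnegative integers N, i, j with N+1 ≥ i+j and m ∈ {1,2}, the expression q^{ω(m,i,j)} · ((1 - q^{3(N+1+i+(-1)^m j)})/(1 - q^{6(N+1)})) · [N+1 choose i, j]_{q^6} · (-q^3; q^3)_{N+1-i-j}, where ω(m,i,j) = (3i+(-1)^m m)i + (3j+(-1)^{m+1} m)j, is a polynomial in q with nonnegative integer coefficients. -/

import Mathlib

open Finset

/-- The finite q-Pochhammer symbol `(a; q)_L = ∏_{t=0}^{L-1} (1 - a qᵗ)` in `ℚ(q)`. -/
noncomputable def qPoch (a q : RatFunc ℚ) (L : ℕ) : RatFunc ℚ :=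
  ∏ t ∈ Finset.range L, (1 - a * q ^ t)

/-- The Gaussian binomial coefficient `[N choose k]_Q` in `ℚ(q)`
(zero unless `N ≥ k ≥ 0`). -/
noncomputable def qBinom (Q : RatFunc ℚ) (N k : ℕ) : RatFunc ℚ :=
  if k ≤ N then ∏ t ∈ Finset.range k, (1 - Q ^ (N - t)) / (1 - Q ^ (t + 1)) else 0

/-- The q-trinomial coefficient `[N choose i, j]_Q = [N choose i]_Q [N-i choose j]_Q`. -/
noncomputable def qTrinom (Q : RatFunc ℚ) (N i j : ℕ) : RatFunc ℚ :=
  qBinom Q N i * qBinom Q (N - i) j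

/-- `ω(m,i,j) = (3i+(-1)^m m)i + (3j+(-1)^{m+1} m)j`. -/
def omegaBU (m i j : ℕ) : ℤ :=
  (3 * i + (-1) ^ m * m) * i + (3 * j + (-1) ^ (m + 1) * m) * j

noncomputable def qBinomM1 (Q : RatFunc ℚ) (n k : ℕ) : RatFunc ℚ :=
  if 1 ≤ k then qBinom Q n (k - 1) else 0

namespace BUaux

/-- interpret a natural-coefficient polynomial as a rational function -/
noncomputable def toRF (P : Polynomial ℕ) : RatFunc ℚ :=
  algebraMap (Polynomial ℚ) (RatFunc ℚ) (P.map (Nat.castRingHom ℚ))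

/-- `f` is (the image of) a polynomial with nonnegative integer coefficients. -/
def Pos (f : RatFunc ℚ) : Prop := ∃ P : Polynomial ℕ, f = toRF P

lemma Pos.add {f g : RatFunc ℚ} (hf : Pos f) (hg : Pos g) : Pos (f + g) := by
  obtain ⟨P, rfl⟩ := hf; obtain ⟨R, rfl⟩ := hg
  exact ⟨P + R, by simp [toRF, Polynomial.map_add]⟩

lemma Pos.mul {f g : RatFunc ℚ} (hf : Pos f) (hg : Pos g) : Pos (f * g) := by
  obtain ⟨P, rfl⟩ := hf; obtain ⟨R, rfl⟩ := hg
  exact ⟨P * R, by simp [toRF, Polynomial.map_mul]⟩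

lemma Pos_zero : Pos (0 : RatFunc ℚ) := ⟨0, by simp [toRF]⟩

lemma Pos_one : Pos (1 : RatFunc ℚ) := ⟨1, by simp [toRF]⟩

lemma Pos_X_pow (n : ℕ) : Pos ((RatFunc.X : RatFunc ℚ) ^ n) :=
  ⟨Polynomial.X ^ n, by simp [toRF, Polynomial.map_pow, map_pow, RatFunc.algebraMap_X]⟩

lemma one_sub_X_pow_ne (n : ℕ) (hn : 0 < n) : (1 : RatFunc ℚ) - RatFunc.X ^ n ≠ 0 := by
  intro h
  have h2 : ((RatFunc.X : RatFunc ℚ)) ^ n = 1 := by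
    have h1 := sub_eq_zero.mp h; exact h1.symm
  have h3 : algebraMap (Polynomial ℚ) (RatFunc ℚ) (Polynomial.X ^ n) =
      algebraMap (Polynomial ℚ) (RatFunc ℚ) 1 := by
    simpa [map_pow, RatFunc.algebraMap_X] using h2
  have h4 : (Polynomial.X : Polynomial ℚ) ^ n = 1 :=
    RatFunc.algebraMap_injective ℚ h3
  have h5 := congrArg Polynomial.natDegree h4
  simp [Polynomial.natDegree_X_pow] at h5
  omega

lemma qBinom_zero (Q : RatFunc ℚ) (N : ℕ) : qBinom Q N 0 = 1 := by
  simp [qBinom]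

lemma qBinom_of_gt {Q : RatFunc ℚ} {N k : ℕ} (h : N < k) : qBinom Q N k = 0 := by
  simp [qBinom, Nat.not_le.mpr h]

lemma qBinom_eq_div (Q : RatFunc ℚ) {N k : ℕ} (h : k ≤ N) :
    qBinom Q N k = (∏ t ∈ Finset.range k, (1 - Q ^ (N - t))) /
      (∏ t ∈ Finset.range k, (1 - Q ^ (t + 1))) := by
  rw [qBinom, if_pos h, Finset.prod_div_distrib]

lemma num_shift (Q : RatFunc ℚ) {N k : ℕ} (h : k ≤ N) :
    (∏ t ∈ Finset.range k, (1 - Q ^ (N + 1 - t))) * (1 - Q ^ (N + 1 - k)) =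
      (∏ t ∈ Finset.range k, (1 - Q ^ (N - t))) * (1 - Q ^ (N + 1)) := by
  cases k with
  | zero => simp
  | succ k' =>
    rw [Finset.prod_range_succ', Finset.prod_range_succ]
    have e1 : ∀ t, N + 1 - (t + 1) = N - t := fun t => by omega
    simp only [e1, Nat.sub_zero]
    ring

lemma qBinom_mul (Q : RatFunc ℚ) {N k : ℕ} (h : k ≤ N) :
    qBinom Q (N + 1) k * (1 - Q ^ (N + 1 - k)) = qBinom Q N k * (1 - Q ^ (N + 1)) := by
  rw [qBinom_eq_div Q (by omega : k ≤ N + 1), qBinom_eq_div Q h,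
    div_mul_eq_mul_div, div_mul_eq_mul_div, num_shift Q h]

lemma qBinom_step (Q : RatFunc ℚ) {N k : ℕ} (h1 : 1 ≤ k) (h2 : k ≤ N) :
    qBinom Q N k = qBinom Q N (k - 1) * ((1 - Q ^ (N + 1 - k)) / (1 - Q ^ k)) := by
  cases k with
  | zero => omega
  | succ k' =>
    rw [qBinom, qBinom, if_pos h2, if_pos (by omega : k' + 1 - 1 ≤ N),
      Nat.add_sub_cancel, Finset.prod_range_succ,
      show N + 1 - (k' + 1) = N - k' from by omega]

lemma qBinom_absorb (Q : RatFunc ℚ) (hQ : ∀ n, 0 < n → (1 : RatFunc ℚ) - Q ^ n ≠ 0)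
    {N k : ℕ} (h : k ≤ N) :
    (1 - Q ^ k) * qBinom Q N k = (1 - Q ^ (N + 1 - k)) * qBinomM1 Q N k := by
  cases k with
  | zero => simp [qBinomM1]
  | succ k' =>
    have hne := hQ (k' + 1) (by omega)
    rw [qBinom_step Q (by omega) h, qBinomM1, if_pos (by omega : 1 ≤ k' + 1)]
    field_simp

lemma qBinom_self (Q : RatFunc ℚ) (hQ : ∀ n, 0 < n → (1 : RatFunc ℚ) - Q ^ n ≠ 0)
    (n : ℕ) : qBinom Q n n = 1 := by
  rw [qBinom_eq_div Q le_rfl]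
  have h1 : (∏ t ∈ Finset.range n, (1 - Q ^ (n - t))) =
      ∏ t ∈ Finset.range n, (1 - Q ^ (t + 1)) := by
    rw [← Finset.prod_range_reflect]
    apply Finset.prod_congr rfl
    intro t ht
    simp only [Finset.mem_range] at ht
    congr 2
    omega
  rw [h1, div_self]
  apply Finset.prod_ne_zero_iff.mpr
  intro t _
  exact hQ (t + 1) (by omega)

lemma qBinom_pascal (Q : RatFunc ℚ) (hQ : ∀ n, 0 < n → (1 : RatFunc ℚ) - Q ^ n ≠ 0)
    {N k : ℕ} (h : k ≤ N) :
    qBinom Q (N + 1) (k + 1) = qBinom Q N (k + 1) + Q ^ (N - k) * qBinom Q N k := by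
  rcases Nat.lt_or_ge k N with hk | hk
  · -- k + 1 ≤ N
    have h2 := qBinom_mul Q (show k + 1 ≤ N from hk)
    have h3 := qBinom_absorb Q hQ (show k + 1 ≤ N from hk)
    rw [qBinomM1, if_pos (by omega : 1 ≤ k + 1), Nat.add_sub_cancel] at h3
    have e0 : N + 1 - (k + 1) = N - k := by omega
    rw [e0] at h2 h3
    have e : Q ^ (N - k) * Q ^ (k + 1) = Q ^ (N + 1) := by
      rw [← pow_add]; congr 1; omega
    apply mul_left_cancel₀ (hQ (N - k) (by omega))
    linear_combination h2 + Q ^ (N - k) * h3 + qBinom Q N (k + 1) * e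
  · -- k = N
    have hkN : k = N := le_antisymm h hk
    subst hkN
    rw [qBinom_self Q hQ, qBinom_of_gt (by omega), qBinom_self Q hQ]
    simp

lemma hQ6 : ∀ n, 0 < n → (1 : RatFunc ℚ) - ((RatFunc.X : RatFunc ℚ) ^ 6) ^ n ≠ 0 := by
  intro n hn
  rw [← pow_mul]
  exact one_sub_X_pow_ne (6 * n) (by omega)

lemma Pos_qBinom (N k : ℕ) : Pos (qBinom ((RatFunc.X : RatFunc ℚ) ^ 6) N k) := by
  induction N generalizing k with
  | zero =>
    cases k with
    | zero => rw [qBinom_zero]; exact Pos_one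
    | succ k' => rw [qBinom_of_gt (by omega)]; exact Pos_zero
  | succ N ih =>
    cases k with
    | zero => rw [qBinom_zero]; exact Pos_one
    | succ k' =>
      rcases le_or_gt (k' + 1) (N + 1) with hk | hk
      · rw [qBinom_pascal _ hQ6 (by omega : k' ≤ N)]
        refine (ih (k' + 1)).add (Pos.mul ?_ (ih k'))
        rw [← pow_mul]
        exact Pos_X_pow _
      · rw [qBinom_of_gt (by omega)]; exact Pos_zero

lemma Pos_qBinomM1 (N k : ℕ) : Pos (qBinomM1 ((RatFunc.X : RatFunc ℚ) ^ 6) N k) := by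
  rw [qBinomM1]
  split
  · exact Pos_qBinom _ _
  · exact Pos_zero

lemma qPoch_succ (a q : RatFunc ℚ) (L : ℕ) :
    qPoch a q (L + 1) = qPoch a q L * (1 - a * q ^ L) := by
  rw [qPoch, qPoch, Finset.prod_range_succ]

lemma qPoch_zero (a q : RatFunc ℚ) : qPoch a q 0 = 1 := by
  simp [qPoch]

lemma Pos_qPoch (L : ℕ) :
    Pos (qPoch (-((RatFunc.X : RatFunc ℚ) ^ 3)) ((RatFunc.X : RatFunc ℚ) ^ 3) L) := by
  induction L with
  | zero => rw [qPoch_zero]; exact Pos_one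
  | succ L ih =>
    rw [qPoch_succ]
    have e : (1 : RatFunc ℚ) - (-(RatFunc.X ^ 3)) * (RatFunc.X ^ 3) ^ L =
        1 + RatFunc.X ^ (3 + 3 * L) := by
      rw [← pow_mul]; ring
    rw [e]
    exact ih.mul (Pos_one.add (Pos_X_pow _))

lemma trinom_reduce (Q : RatFunc ℚ) (hQ : ∀ n, 0 < n → (1 : RatFunc ℚ) - Q ^ n ≠ 0)
    {N i j : ℕ} (hij : i + j ≤ N) :
    (1 - Q ^ (N + 1 - i - j)) * (qBinom Q (N + 1) i * qBinom Q (N + 1 - i) j) =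
      (1 - Q ^ (N + 1)) * (qBinom Q N i * qBinom Q (N - i) j) := by
  have h1 := qBinom_mul Q (show i ≤ N by omega)
  have h2 := qBinom_mul (Q := Q) (N := N - i) (show j ≤ N - i by omega)
  rw [show N - i + 1 = N + 1 - i from by omega] at h2
  apply mul_left_cancel₀ (hQ (N + 1 - i) (by omega))
  linear_combination ((1 - Q ^ (N + 1 - i - j)) * qBinom Q (N + 1 - i) j) * h1 +
    ((1 - Q ^ (N + 1)) * qBinom Q N i) * h2

lemma Pos_congr {f g : RatFunc ℚ} (h : f = g) (hg : Pos g) : Pos f := h ▸ hg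

end BUaux

open BUaux in
/-- Berkovich–Uncu, Theorem 4 (def2): for `m ∈ {1,2}` and `N + 1 ≥ i + j`, the rational
function
`q^{ω(m,i,j)} ((1 - q^{3(N+1+i+(-1)^m j)})/(1 - q^{6(N+1)})) [N+1 choose i,j]_{q⁶}
  (-q³;q³)_{N+1-i-j}`
is a polynomial in `q` with nonnegative integer coefficients (it equals the partition
generating function `P_{m,2N+1}(i,j,q)`). -/
theorem def2_is_polynomial_nonneg (m : ℕ) (hm : m = 1 ∨ m = 2) (N i j : ℕ)
    (hij : i + j ≤ N + 1) :
    ∃ P : Polynomial ℚ,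
      (RatFunc.X : RatFunc ℚ) ^ (omegaBU m i j) *
          ((1 - RatFunc.X ^ ((3 * ((N : ℤ) + 1 + i + (-1) ^ m * j)))) /
            (1 - RatFunc.X ^ ((6 * ((N : ℤ) + 1))))) *
          qTrinom (RatFunc.X ^ 6) (N + 1) i j *
          qPoch (-(RatFunc.X ^ 3)) (RatFunc.X ^ 3) (N + 1 - i - j) =
        algebraMap (Polynomial ℚ) (RatFunc ℚ) P ∧
      ∀ k, ∃ c : ℕ, P.coeff k = (c : ℚ) := by
  have key : ∀ f : RatFunc ℚ, Pos f →
      ∃ P : Polynomial ℚ, f = algebraMap (Polynomial ℚ) (RatFunc ℚ) P ∧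
        ∀ k, ∃ c : ℕ, P.coeff k = (c : ℚ) := by
    rintro f ⟨Pn, rfl⟩
    refine ⟨Pn.map (Nat.castRingHom ℚ), rfl, fun k => ⟨Pn.coeff k, ?_⟩⟩
    simp [Polynomial.coeff_map]
  apply key
  have hD : (1 : RatFunc ℚ) - RatFunc.X ^ (6 * (N + 1)) ≠ 0 :=
    one_sub_X_pow_ne _ (by omega)
  have hexp6 : ((RatFunc.X : RatFunc ℚ)) ^ (6 * ((N : ℤ) + 1)) =
      RatFunc.X ^ (6 * (N + 1)) := by
    rw [show (6 * ((N : ℤ) + 1)) = ((6 * (N + 1) : ℕ) : ℤ) by push_cast; ring, zpow_natCast]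
  rw [hexp6]
  rcases hm with rfl | rfl
  · -- m = 1
    have hii : i ≤ i * i := by
      rcases Nat.eq_zero_or_pos i with rfl | h
      · simp
      · exact Nat.le_mul_of_pos_left i h
    have hle1 : i ≤ 3 * i * i + 3 * j * j + j := by nlinarith [hii]
    have hω : ((RatFunc.X : RatFunc ℚ)) ^ (omegaBU 1 i j) =
        RatFunc.X ^ (3 * i * i + 3 * j * j + j - i) := by
      rw [show omegaBU 1 i j = ((3 * i * i + 3 * j * j + j - i : ℕ) : ℤ) by
        simp only [omegaBU]; push_cast [Nat.cast_sub hle1]; ring, zpow_natCast]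
    have hA : ((RatFunc.X : RatFunc ℚ)) ^ (3 * ((N : ℤ) + 1 + i + (-1) ^ 1 * j)) =
        RatFunc.X ^ (3 * (N + 1 + i - j)) := by
      rw [show (3 * ((N : ℤ) + 1 + i + (-1) ^ 1 * j)) = ((3 * (N + 1 + i - j) : ℕ) : ℤ) by
        push_cast [Nat.cast_sub (show j ≤ N + 1 + i by omega)]; ring, zpow_natCast]
    rw [hω, hA]
    rcases Nat.lt_or_ge (i + j) (N + 1) with hL | hL
    · -- L ≥ 1
      obtain ⟨l, rfl⟩ : ∃ l, N = i + j + l := ⟨N - i - j, by omega⟩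
      rw [show 3 * (i + j + l + 1 + i - j) = 6 * i + 3 * l + 3 from by omega]
      simp only [qTrinom]
      rw [show i + j + l + 1 - i = j + l + 1 from by omega,
        show j + l + 1 - j = l + 1 from by omega]
      have hT1 := trinom_reduce ((RatFunc.X : RatFunc ℚ) ^ 6) hQ6
        (show i + j ≤ i + j + l by omega)
      rw [show i + j + l + 1 - i - j = l + 1 from by omega,
        show i + j + l + 1 - i = j + l + 1 from by omega,
        show i + j + l - i = j + l from by omega] at hT1
      have hf2 := qBinom_absorb ((RatFunc.X : RatFunc ℚ) ^ 6) hQ6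
        (show i ≤ i + j + l by omega)
      rw [show i + j + l + 1 - i = j + l + 1 from by omega] at hf2
      have hf3 := qBinom_absorb ((RatFunc.X : RatFunc ℚ) ^ 6) hQ6
        (show j ≤ j + l by omega)
      rw [show j + l + 1 - j = l + 1 from by omega] at hf3
      have hfc := qPoch_succ (-((RatFunc.X : RatFunc ℚ) ^ 3)) ((RatFunc.X : RatFunc ℚ) ^ 3) l
      apply Pos_congr (g :=
        RatFunc.X ^ (3 * i * i + 3 * j * j + j - i) *
          (RatFunc.X ^ (6 * i) *
              (qBinom (RatFunc.X ^ 6) (i + j + l) i * qBinom (RatFunc.X ^ 6) (j + l) j) *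
              qPoch (-(RatFunc.X ^ 3)) (RatFunc.X ^ 3) l +
            (qBinomM1 (RatFunc.X ^ 6) (i + j + l) i * qBinom (RatFunc.X ^ 6) (j + l) j +
                ((RatFunc.X : RatFunc ℚ) ^ 6) ^ (l + 1) *
                  (qBinomM1 (RatFunc.X ^ 6) (i + j + l) i *
                    qBinomM1 (RatFunc.X ^ 6) (j + l) j)) *
              qPoch (-(RatFunc.X ^ 3)) (RatFunc.X ^ 3) (l + 1)))
      · have hu : (1 : RatFunc ℚ) - ((RatFunc.X : RatFunc ℚ) ^ 6) ^ (l + 1) ≠ 0 :=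
          hQ6 (l + 1) (by omega)
        have main : RatFunc.X ^ (3 * i * i + 3 * j * j + j - i) *
            ((1 - RatFunc.X ^ (6 * i + 3 * l + 3)) *
              (qBinom (RatFunc.X ^ 6) (i + j + l + 1) i *
                qBinom (RatFunc.X ^ 6) (j + l + 1) j)) *
            qPoch (-(RatFunc.X ^ 3)) (RatFunc.X ^ 3) (l + 1) =
            (RatFunc.X ^ (3 * i * i + 3 * j * j + j - i) *
              (RatFunc.X ^ (6 * i) *
                  (qBinom (RatFunc.X ^ 6) (i + j + l) i * qBinom (RatFunc.X ^ 6) (j + l) j) *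
                  qPoch (-(RatFunc.X ^ 3)) (RatFunc.X ^ 3) l +
                (qBinomM1 (RatFunc.X ^ 6) (i + j + l) i * qBinom (RatFunc.X ^ 6) (j + l) j +
                    ((RatFunc.X : RatFunc ℚ) ^ 6) ^ (l + 1) *
                      (qBinomM1 (RatFunc.X ^ 6) (i + j + l) i *
                        qBinomM1 (RatFunc.X ^ 6) (j + l) j)) *
                  qPoch (-(RatFunc.X ^ 3)) (RatFunc.X ^ 3) (l + 1))) *
            (1 - RatFunc.X ^ (6 * (i + j + l + 1))) := by
          apply mul_left_cancel₀ hu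
          linear_combination
            (RatFunc.X ^ (3 * i * i + 3 * j * j + j - i) *
              (1 - RatFunc.X ^ (6 * i + 3 * l + 3)) *
              qPoch (-(RatFunc.X ^ 3)) (RatFunc.X ^ 3) (l + 1)) * hT1 +
            (RatFunc.X ^ (3 * i * i + 3 * j * j + j - i) *
              (1 - RatFunc.X ^ (6 * (i + j + l + 1))) * qBinom (RatFunc.X ^ 6) (j + l) j *
              qPoch (-(RatFunc.X ^ 3)) (RatFunc.X ^ 3) (l + 1)) * hf2 +
            (RatFunc.X ^ (3 * i * i + 3 * j * j + j - i) *
              (1 - RatFunc.X ^ (6 * (i + j + l + 1))) *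
              ((RatFunc.X : RatFunc ℚ) ^ 6) ^ (l + 1) *
              qBinomM1 (RatFunc.X ^ 6) (i + j + l) i *
              qPoch (-(RatFunc.X ^ 3)) (RatFunc.X ^ 3) (l + 1)) * hf3 +
            (RatFunc.X ^ (3 * i * i + 3 * j * j + j - i) *
              (1 - RatFunc.X ^ (6 * (i + j + l + 1))) * RatFunc.X ^ (6 * i) *
              (1 - RatFunc.X ^ (3 * l + 3)) *
              (qBinom (RatFunc.X ^ 6) (i + j + l) i * qBinom (RatFunc.X ^ 6) (j + l) j)) * hfc
        field_simp
        linear_combination main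
      · refine (Pos_X_pow _).mul (Pos.add ?_ ?_)
        · exact ((Pos_X_pow _).mul ((Pos_qBinom _ _).mul (Pos_qBinom _ _))).mul (Pos_qPoch l)
        · refine (Pos.add ((Pos_qBinomM1 _ _).mul (Pos_qBinom _ _)) ?_).mul (Pos_qPoch (l + 1))
          refine Pos.mul ?_ ((Pos_qBinomM1 _ _).mul (Pos_qBinomM1 _ _))
          rw [← pow_mul]; exact Pos_X_pow _
    · -- L = 0 : i + j = N + 1
      have hij0 : i + j = N + 1 := by omega
      rcases Nat.eq_zero_or_pos i with rfl | hi
      · -- i = 0 : expression vanishes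
        have hz : (1 : RatFunc ℚ) - RatFunc.X ^ (3 * (N + 1 + 0 - j)) = 0 := by
          rw [show 3 * (N + 1 + 0 - j) = 0 from by omega, pow_zero, sub_self]
        rw [hz]
        simp only [zero_div, mul_zero, zero_mul]
        exact Pos_zero
      · rcases Nat.lt_or_ge i (N + 1) with hiN | hiN
        · -- 1 ≤ i ≤ N
          rw [show 3 * (N + 1 + i - j) = 6 * i from by omega,
            show N + 1 - i - j = 0 from by omega, qPoch_zero]
          simp only [qTrinom]
          have h2 := qBinom_mul ((RatFunc.X : RatFunc ℚ) ^ 6) (show i ≤ N by omega)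
          have h3 := qBinom_absorb ((RatFunc.X : RatFunc ℚ) ^ 6) hQ6 (show i ≤ N by omega)
          apply Pos_congr (g :=
            RatFunc.X ^ (3 * i * i + 3 * j * j + j - i) *
              (qBinomM1 (RatFunc.X ^ 6) N i * qBinom (RatFunc.X ^ 6) (N + 1 - i) j))
          · have main : RatFunc.X ^ (3 * i * i + 3 * j * j + j - i) *
                ((1 - RatFunc.X ^ (6 * i)) *
                  (qBinom (RatFunc.X ^ 6) (N + 1) i * qBinom (RatFunc.X ^ 6) (N + 1 - i) j)) =
                RatFunc.X ^ (3 * i * i + 3 * j * j + j - i) *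
                  (qBinomM1 (RatFunc.X ^ 6) N i * qBinom (RatFunc.X ^ 6) (N + 1 - i) j) *
                  (1 - RatFunc.X ^ (6 * (N + 1))) := by
              apply mul_left_cancel₀ (hQ6 (N + 1 - i) (by omega))
              linear_combination
                (RatFunc.X ^ (3 * i * i + 3 * j * j + j - i) *
                  (1 - ((RatFunc.X : RatFunc ℚ) ^ 6) ^ i) *
                  qBinom (RatFunc.X ^ 6) (N + 1 - i) j) * h2 +
                (RatFunc.X ^ (3 * i * i + 3 * j * j + j - i) *
                  (1 - ((RatFunc.X : RatFunc ℚ) ^ 6) ^ (N + 1)) *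
                  qBinom (RatFunc.X ^ 6) (N + 1 - i) j) * h3
            field_simp
            linear_combination main
          · exact (Pos_X_pow _).mul ((Pos_qBinomM1 _ _).mul (Pos_qBinom _ _))
        · -- i = N + 1, j = 0
          have hj0 : j = 0 := by omega
          subst hj0
          rw [show 3 * (N + 1 + i - 0) = 6 * (N + 1) from by omega, div_self hD,
            show N + 1 - i - 0 = 0 from by omega, qPoch_zero]
          simp only [qTrinom]
          exact (((Pos_X_pow _).mul Pos_one).mul
            ((Pos_qBinom _ _).mul (Pos_qBinom _ _))).mul Pos_one
  · -- m = 2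
    have hjj : j ≤ j * j := by
      rcases Nat.eq_zero_or_pos j with rfl | h
      · simp
      · exact Nat.le_mul_of_pos_left j h
    have hle2 : 2 * j ≤ 3 * i * i + 2 * i + 3 * j * j := by nlinarith [hjj]
    have hω : ((RatFunc.X : RatFunc ℚ)) ^ (omegaBU 2 i j) =
        RatFunc.X ^ (3 * i * i + 2 * i + 3 * j * j - 2 * j) := by
      rw [show omegaBU 2 i j = ((3 * i * i + 2 * i + 3 * j * j - 2 * j : ℕ) : ℤ) by
        simp only [omegaBU]; push_cast [Nat.cast_sub hle2]; ring, zpow_natCast]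
    have hA : ((RatFunc.X : RatFunc ℚ)) ^ (3 * ((N : ℤ) + 1 + i + (-1) ^ 2 * j)) =
        RatFunc.X ^ (3 * (N + 1 + i + j)) := by
      rw [show (3 * ((N : ℤ) + 1 + i + (-1) ^ 2 * j)) = ((3 * (N + 1 + i + j) : ℕ) : ℤ) by
        push_cast; ring, zpow_natCast]
    rw [hω, hA]
    rcases Nat.lt_or_ge (i + j) (N + 1) with hL | hL
    · -- L ≥ 1
      obtain ⟨l, rfl⟩ : ∃ l, N = i + j + l := ⟨N - i - j, by omega⟩
      rw [show 3 * (i + j + l + 1 + i + j) = 6 * i + 6 * j + 3 * l + 3 from by omega]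
      simp only [qTrinom]
      rw [show i + j + l + 1 - i = j + l + 1 from by omega,
        show j + l + 1 - j = l + 1 from by omega]
      have hT1 := trinom_reduce ((RatFunc.X : RatFunc ℚ) ^ 6) hQ6
        (show i + j ≤ i + j + l by omega)
      rw [show i + j + l + 1 - i - j = l + 1 from by omega,
        show i + j + l + 1 - i = j + l + 1 from by omega,
        show i + j + l - i = j + l from by omega] at hT1
      have hf2 := qBinom_absorb ((RatFunc.X : RatFunc ℚ) ^ 6) hQ6
        (show i ≤ i + j + l by omega)
      rw [show i + j + l + 1 - i = j + l + 1 from by omega] at hf2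
      have hf3 := qBinom_absorb ((RatFunc.X : RatFunc ℚ) ^ 6) hQ6
        (show j ≤ j + l by omega)
      rw [show j + l + 1 - j = l + 1 from by omega] at hf3
      have hfc := qPoch_succ (-((RatFunc.X : RatFunc ℚ) ^ 3)) ((RatFunc.X : RatFunc ℚ) ^ 3) l
      apply Pos_congr (g :=
        RatFunc.X ^ (3 * i * i + 2 * i + 3 * j * j - 2 * j) *
          (RatFunc.X ^ (6 * i + 6 * j) *
              (qBinom (RatFunc.X ^ 6) (i + j + l) i * qBinom (RatFunc.X ^ 6) (j + l) j) *
              qPoch (-(RatFunc.X ^ 3)) (RatFunc.X ^ 3) l +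
            (qBinomM1 (RatFunc.X ^ 6) (i + j + l) i * qBinom (RatFunc.X ^ 6) (j + l) j +
                ((RatFunc.X : RatFunc ℚ) ^ 6) ^ (l + 1) *
                  (qBinomM1 (RatFunc.X ^ 6) (i + j + l) i *
                    qBinomM1 (RatFunc.X ^ 6) (j + l) j) +
                ((RatFunc.X : RatFunc ℚ) ^ 6) ^ i *
                  (qBinom (RatFunc.X ^ 6) (i + j + l) i *
                    qBinomM1 (RatFunc.X ^ 6) (j + l) j)) *
              qPoch (-(RatFunc.X ^ 3)) (RatFunc.X ^ 3) (l + 1)))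
      · have hu : (1 : RatFunc ℚ) - ((RatFunc.X : RatFunc ℚ) ^ 6) ^ (l + 1) ≠ 0 :=
          hQ6 (l + 1) (by omega)
        have main : RatFunc.X ^ (3 * i * i + 2 * i + 3 * j * j - 2 * j) *
            ((1 - RatFunc.X ^ (6 * i + 6 * j + 3 * l + 3)) *
              (qBinom (RatFunc.X ^ 6) (i + j + l + 1) i *
                qBinom (RatFunc.X ^ 6) (j + l + 1) j)) *
            qPoch (-(RatFunc.X ^ 3)) (RatFunc.X ^ 3) (l + 1) =
            (RatFunc.X ^ (3 * i * i + 2 * i + 3 * j * j - 2 * j) *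
              (RatFunc.X ^ (6 * i + 6 * j) *
                  (qBinom (RatFunc.X ^ 6) (i + j + l) i * qBinom (RatFunc.X ^ 6) (j + l) j) *
                  qPoch (-(RatFunc.X ^ 3)) (RatFunc.X ^ 3) l +
                (qBinomM1 (RatFunc.X ^ 6) (i + j + l) i * qBinom (RatFunc.X ^ 6) (j + l) j +
                    ((RatFunc.X : RatFunc ℚ) ^ 6) ^ (l + 1) *
                      (qBinomM1 (RatFunc.X ^ 6) (i + j + l) i *
                        qBinomM1 (RatFunc.X ^ 6) (j + l) j) +
                    ((RatFunc.X : RatFunc ℚ) ^ 6) ^ i *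
                      (qBinom (RatFunc.X ^ 6) (i + j + l) i *
                        qBinomM1 (RatFunc.X ^ 6) (j + l) j)) *
                  qPoch (-(RatFunc.X ^ 3)) (RatFunc.X ^ 3) (l + 1))) *
            (1 - RatFunc.X ^ (6 * (i + j + l + 1))) := by
          apply mul_left_cancel₀ hu
          linear_combination
            (RatFunc.X ^ (3 * i * i + 2 * i + 3 * j * j - 2 * j) *
              (1 - RatFunc.X ^ (6 * i + 6 * j + 3 * l + 3)) *
              qPoch (-(RatFunc.X ^ 3)) (RatFunc.X ^ 3) (l + 1)) * hT1 +
            (RatFunc.X ^ (3 * i * i + 2 * i + 3 * j * j - 2 * j) *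
              (1 - RatFunc.X ^ (6 * (i + j + l + 1))) * qBinom (RatFunc.X ^ 6) (j + l) j *
              qPoch (-(RatFunc.X ^ 3)) (RatFunc.X ^ 3) (l + 1)) * hf2 +
            (RatFunc.X ^ (3 * i * i + 2 * i + 3 * j * j - 2 * j) *
              (1 - RatFunc.X ^ (6 * (i + j + l + 1))) *
              (((RatFunc.X : RatFunc ℚ) ^ 6) ^ (l + 1) *
                  qBinomM1 (RatFunc.X ^ 6) (i + j + l) i +
                ((RatFunc.X : RatFunc ℚ) ^ 6) ^ i * qBinom (RatFunc.X ^ 6) (i + j + l) i) *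
              qPoch (-(RatFunc.X ^ 3)) (RatFunc.X ^ 3) (l + 1)) * hf3 +
            (RatFunc.X ^ (3 * i * i + 2 * i + 3 * j * j - 2 * j) *
              (1 - RatFunc.X ^ (6 * (i + j + l + 1))) * RatFunc.X ^ (6 * i + 6 * j) *
              (1 - RatFunc.X ^ (3 * l + 3)) *
              (qBinom (RatFunc.X ^ 6) (i + j + l) i * qBinom (RatFunc.X ^ 6) (j + l) j)) * hfc
        field_simp
        linear_combination main
      · refine (Pos_X_pow _).mul (Pos.add ?_ ?_)
        · exact ((Pos_X_pow _).mul ((Pos_qBinom _ _).mul (Pos_qBinom _ _))).mul (Pos_qPoch l)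
        · refine (Pos.add (Pos.add ((Pos_qBinomM1 _ _).mul (Pos_qBinom _ _)) ?_) ?_).mul
            (Pos_qPoch (l + 1))
        
          · refine Pos.mul ?_ ((Pos_qBinomM1 _ _).mul (Pos_qBinomM1 _ _))
            rw [← pow_mul]; exact Pos_X_pow _
          · refine Pos.mul ?_ ((Pos_qBinom _ _).mul (Pos_qBinomM1 _ _))
            rw [← pow_mul]; exact Pos_X_pow _
    · -- L = 0 : i + j = N + 1
      rw [show 3 * (N + 1 + i + j) = 6 * (N + 1) from by omega, div_self hD,
        show N + 1 - i - j = 0 from by omega, qPoch_zero]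
      simp only [qTrinom]
      exact (((Pos_X_pow _).mul Pos_one).mul
        ((Pos_qBinom _ _).mul (Pos_qBinom _ _))).mul Pos_one
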